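/- Let B be a finite set, h : B → ℝ with a unique minimizer b*. For the Gibbs distributions π_β, for every b ≠ b* the map β ↦ π_β(b) is eventually nonincreasing in β, and the sum over an increasing sequence β_T ↑ ∞ of total variation differences Σ_{T=0}^∞ Σ_{b∈B} |π_{β_{T+1}}(b) − π_{β_T}(b)| is finite. -/

import Mathlib

open Finset Filter

section Aux

variable {B : Type*} [Fintype B]

private lemma Zpos (h : B → ℝ) [Nonempty B] (β : ℝ) :
    0 < ∑ b', Real.exp (-β * h b') :=
  Finset.sum_pos (fun _ _ => Real.exp_pos _) Finset.univ_nonempty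

private lemma sum_pi_one (h : B → ℝ) [Nonempty B] (β : ℝ) :
    ∑ b, Real.exp (-β * h b) / (∑ b', Real.exp (-β * h b')) = 1 := by
  rw [← Finset.sum_div, div_self (Zpos h β).ne']

/-- The Gibbs mean of `h` tends to the minimum value `h bstar` as `β → ∞`. -/
private lemma mean_tendsto (h : B → ℝ) [Nonempty B] (bstar : B)
    (hmin : ∀ b : B, b ≠ bstar → h bstar < h b) :
    Tendsto (fun β => (∑ b', h b' * Real.exp (-β * h b')) / (∑ b', Real.exp (-β * h b')))
      atTop (nhds (h bstar)) := by
  classical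
  have hE : ∀ b' : B, Tendsto (fun β => Real.exp (-β * (h b' - h bstar))) atTop
      (nhds (if b' = bstar then 1 else 0)) := by
    intro b'
    by_cases hb' : b' = bstar
    · subst hb'
      simp only [if_pos rfl, sub_self, mul_zero, Real.exp_zero]
      exact tendsto_const_nhds
    · simp only [if_neg hb']
      have hc : (0 : ℝ) < h b' - h bstar := sub_pos.2 (hmin b' hb')
      have h1 : Tendsto (fun β : ℝ => β * (h b' - h bstar)) atTop atTop :=
        Tendsto.atTop_mul_const hc tendsto_id
      have h2 : Tendsto (fun β : ℝ => -(β * (h b' - h bstar))) atTop atBot :=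
        tendsto_neg_atTop_atBot.comp h1
      have h3 : Tendsto (fun β : ℝ => Real.exp (-(β * (h b' - h bstar)))) atTop (nhds 0) :=
        Real.tendsto_exp_atBot.comp h2
      simpa [neg_mul] using h3
  have hNum : Tendsto (fun β => ∑ b', h b' * Real.exp (-β * (h b' - h bstar))) atTop
      (nhds (h bstar)) := by
    have := tendsto_finset_sum Finset.univ
      (fun b' _ => ((hE b').const_mul (h b')))
    have hs : (∑ b' : B, h b' * (if b' = bstar then (1:ℝ) else 0)) = h bstar := by
      rw [Finset.sum_congr rfl (fun b' _ => by rw [mul_ite, mul_one, mul_zero])]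
      simp
    rwa [hs] at this
  have hDen : Tendsto (fun β => ∑ b' : B, Real.exp (-β * (h b' - h bstar))) atTop
      (nhds 1) := by
    have := tendsto_finset_sum Finset.univ (fun b' (_ : b' ∈ Finset.univ) => hE b')
    have hs : (∑ b' : B, (if b' = bstar then (1:ℝ) else 0)) = 1 := by simp
    rwa [hs] at this
  have hDpos : ∀ β : ℝ, 0 < ∑ b' : B, Real.exp (-β * (h b' - h bstar)) :=
    fun β => Finset.sum_pos (fun _ _ => Real.exp_pos _) Finset.univ_nonempty
  have hratio : Tendsto
      (fun β => (∑ b', h b' * Real.exp (-β * (h b' - h bstar))) /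
        (∑ b' : B, Real.exp (-β * (h b' - h bstar)))) atTop (nhds (h bstar)) := by
    have := hNum.div hDen one_ne_zero
    rw [div_one] at this; exact this
  have heq : ∀ β : ℝ,
      (∑ b', h b' * Real.exp (-β * h b')) / (∑ b', Real.exp (-β * h b')) =
      (∑ b', h b' * Real.exp (-β * (h b' - h bstar))) /
        (∑ b' : B, Real.exp (-β * (h b' - h bstar))) := by
    intro β
    have hg : Real.exp (β * h bstar) ≠ 0 := (Real.exp_pos _).ne'
    rw [div_eq_div_iff (Zpos h β).ne' (hDpos β).ne']
    rw [Finset.sum_mul, Finset.sum_mul]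
    apply Finset.sum_congr rfl
    intro b' _
    have e1 : Real.exp (-β * (h b' - h bstar)) =
        Real.exp (-β * h b') * Real.exp (β * h bstar) := by
      rw [← Real.exp_add]; ring_nf
    -- goal: h b' * exp(-β h b') * Σ exp(-β (h x - h bstar)) = h b' * exp(-β(h b'-h bstar)) * Σ exp(-β h x)
    rw [e1]
    rw [Finset.sum_congr rfl (fun x _ => by
      rw [show Real.exp (-β * (h x - h bstar)) =
        Real.exp (-β * h x) * Real.exp (β * h bstar) from by rw [← Real.exp_add]; ring_nf])]
    rw [← Finset.sum_mul]
    ring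
  simp only [heq]
  exact hratio

/-- derivative of the Gibbs probability -/
private lemma pi_hasDeriv (h : B → ℝ) [Nonempty B] (b : B) (β : ℝ) :
    HasDerivAt (fun β => Real.exp (-β * h b) / ∑ b', Real.exp (-β * h b'))
      ((Real.exp (-β * h b) / (∑ b', Real.exp (-β * h b'))) *
        ((∑ b', h b' * Real.exp (-β * h b')) / (∑ b', Real.exp (-β * h b')) - h b)) β := by
  have hlin : ∀ c : ℝ, HasDerivAt (fun β : ℝ => -β * c) (-c) β := by
    intro c
    simpa using ((hasDerivAt_id β).neg.mul_const c)
  have hN : HasDerivAt (fun β : ℝ => Real.exp (-β * h b))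
      (Real.exp (-β * h b) * (-(h b))) β := (hlin (h b)).exp
  have hZ : HasDerivAt (fun β : ℝ => ∑ b', Real.exp (-β * h b'))
      (∑ b', Real.exp (-β * h b') * (-(h b'))) β :=
    HasDerivAt.fun_sum (fun b' _ => (hlin (h b')).exp)
  have := hN.fun_div hZ (Zpos h β).ne'
  refine this.congr_deriv ?_
  have hZne : (∑ b' : B, Real.exp (-β * h b')) ≠ 0 := (Zpos h β).ne'
  have hsum : (∑ b' : B, Real.exp (-β * h b') * (-(h b'))) =
      -(∑ b', h b' * Real.exp (-β * h b')) := by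
    rw [← Finset.sum_neg_distrib]
    exact Finset.sum_congr rfl (fun b' _ => by ring)
  rw [hsum]
  field_simp
  ring

private lemma pi_antitone (h : B → ℝ) (bstar : B)
    (hmin : ∀ b : B, b ≠ bstar → h bstar < h b) (b : B) (hb : b ≠ bstar) :
    ∃ β0 : ℝ, ∀ β1 β2, β0 ≤ β1 → β1 ≤ β2 →
      Real.exp (-β2 * h b) / (∑ b', Real.exp (-β2 * h b')) ≤
      Real.exp (-β1 * h b) / (∑ b', Real.exp (-β1 * h b')) := by
  haveI : Nonempty B := ⟨bstar⟩
  have hev : ∀ᶠ β in atTop,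
      (∑ b', h b' * Real.exp (-β * h b')) / (∑ b', Real.exp (-β * h b')) < h b :=
    (mean_tendsto h bstar hmin).eventually_lt_const (hmin b hb)
  obtain ⟨β0, hβ0⟩ := eventually_atTop.1 hev
  refine ⟨β0, fun β1 β2 h1 h2 => ?_⟩
  set f : ℝ → ℝ := fun β => Real.exp (-β * h b) / ∑ b', Real.exp (-β * h b') with hf
  have hdiff : ∀ x : ℝ, HasDerivAt f
      ((Real.exp (-x * h b) / (∑ b', Real.exp (-x * h b'))) *
        ((∑ b', h b' * Real.exp (-x * h b')) / (∑ b', Real.exp (-x * h b')) - h b)) x :=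
    fun x => pi_hasDeriv h b x
  have hanti : AntitoneOn f (Set.Ici β0) := by
    apply antitoneOn_of_deriv_nonpos (convex_Ici β0)
    · exact fun x _ => ((hdiff x).differentiableAt).continuousAt.continuousWithinAt
    · intro x _
      exact ((hdiff x).differentiableAt).differentiableWithinAt
    · intro x hx
      rw [interior_Ici] at hx
      rw [(hdiff x).deriv]
      apply mul_nonpos_iff.2
      refine Or.inl ⟨?_, ?_⟩
      · positivity
      · exact sub_nonpos.2 (le_of_lt (hβ0 x (le_of_lt hx)))
  exact hanti (Set.mem_Ici.2 h1) (Set.mem_Ici.2 (h1.trans h2)) h2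

end Aux

theorem stmt12 {B : Type*} [Fintype B] (h : B → ℝ) (bstar : B)
    (hmin : ∀ b : B, b ≠ bstar → h bstar < h b)
    (π : ℝ → B → ℝ)
    (hπ : ∀ β b, π β b = Real.exp (-β * h b) / ∑ b', Real.exp (-β * h b')) :
    (∀ b : B, b ≠ bstar → ∃ β0 : ℝ, ∀ β1 β2, β0 ≤ β1 → β1 ≤ β2 → π β2 b ≤ π β1 b) ∧
      ∀ βseq : ℕ → ℝ, StrictMono βseq → (∀ T, 0 < βseq T) →
        Filter.Tendsto βseq Filter.atTop Filter.atTop →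
        Summable (fun T : ℕ => ∑ b, |π (βseq (T + 1)) b - π (βseq T) b|) := by
  classical
  have hNE : Nonempty B := ⟨bstar⟩
  have hmono : ∀ b : B, b ≠ bstar →
      ∃ β0 : ℝ, ∀ β1 β2, β0 ≤ β1 → β1 ≤ β2 → π β2 b ≤ π β1 b := by
    intro b hb
    obtain ⟨β0, hβ0⟩ := pi_antitone h bstar hmin b hb
    exact ⟨β0, fun β1 β2 h1 h2 => by rw [hπ, hπ]; exact hβ0 β1 β2 h1 h2⟩
  have hπnonneg : ∀ β b, 0 ≤ π β b := by
    intro β b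
    rw [hπ]
    positivity
  refine ⟨hmono, ?_⟩
  intro βseq hsm _hpos htop
  -- summability for each b ≠ bstar
  have key : ∀ b : B, b ≠ bstar →
      Summable (fun T : ℕ => |π (βseq (T + 1)) b - π (βseq T) b|) := by
    intro b hb
    obtain ⟨β0, hβ0⟩ := hmono b hb
    obtain ⟨T0, hT0⟩ := eventually_atTop.1 (htop.eventually_ge_atTop β0)
    rw [← summable_nat_add_iff T0]
    have habs : ∀ n : ℕ,
        |π (βseq (n + T0 + 1)) b - π (βseq (n + T0)) b| =
          π (βseq (n + T0)) b - π (βseq (n + T0 + 1)) b := by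
      intro n
      rw [abs_sub_comm, abs_of_nonneg]
      exact sub_nonneg.2 (hβ0 (βseq (n + T0)) (βseq (n + T0 + 1))
        (hT0 _ (Nat.le_add_left _ _)) (le_of_lt (hsm (Nat.lt_succ_self _))))
    simp only [habs]
    apply summable_of_sum_range_le (c := π (βseq T0) b)
    · intro n
      rw [← habs n]
      exact abs_nonneg _
    · intro n
      have htel : ∑ i ∈ Finset.range n,
          (π (βseq (i + T0)) b - π (βseq (i + T0 + 1)) b) =
          π (βseq T0) b - π (βseq (n + T0)) b := by
        have := Finset.sum_range_sub' (f := fun i => π (βseq (i + T0)) b) n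
        simpa [Nat.add_right_comm] using this
      rw [htel]
      have := hπnonneg (βseq (n + T0)) b
      linarith
  -- summability for bstar by comparison
  have keystar : Summable (fun T : ℕ => |π (βseq (T + 1)) bstar - π (βseq T) bstar|) := by
    have hsum1 : ∀ β : ℝ, ∑ b, π β b = 1 := by
      intro β
      rw [Finset.sum_congr rfl (fun b _ => hπ β b)]
      exact sum_pi_one h β
    have hbd : ∀ T : ℕ, |π (βseq (T + 1)) bstar - π (βseq T) bstar| ≤
        ∑ b ∈ Finset.univ.erase bstar, |π (βseq (T + 1)) b - π (βseq T) b| := by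
      intro T
      have h1 : π (βseq (T + 1)) bstar - π (βseq T) bstar =
          -(∑ b ∈ Finset.univ.erase bstar, (π (βseq (T + 1)) b - π (βseq T) b)) := by
        have e1 : π (βseq (T + 1)) bstar +
            ∑ b ∈ Finset.univ.erase bstar, π (βseq (T + 1)) b = 1 := by
          rw [Finset.add_sum_erase _ _ (Finset.mem_univ bstar)]; exact hsum1 _
        have e2 : π (βseq T) bstar +
            ∑ b ∈ Finset.univ.erase bstar, π (βseq T) b = 1 := by
          rw [Finset.add_sum_erase _ _ (Finset.mem_univ bstar)]; exact hsum1 _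
        rw [Finset.sum_sub_distrib]
        linarith
      rw [h1, abs_neg]
      exact (Finset.abs_sum_le_sum_abs _ _)
    apply Summable.of_nonneg_of_le (fun T => abs_nonneg _) hbd
    exact summable_sum (fun b hbmem => key b (Finset.ne_of_mem_erase hbmem))
  apply summable_sum
  intro b _
  by_cases hb : b = bstar
  · subst hb; exact keystar
  · exact key b hb
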